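/- arXiv:1402.4825 — 5 statements merged into one kernel-verified Lean document; each statement's English description precedes it below -/
import Mathlib

section
/- Let f be an almost periodic function on ℝ. Then for every λ ∈ ℝ the Fourier–Bohr coefficient of f at λ exists; that is, the limit lim_{T→∞} (1/(2T)) ∫_{−T}^{T} f(t)·exp(−i·λ·t) dt exists in ℂ. -/
open Complex MeasureTheory Filter Topology

noncomputable section

/-- The set of generalized trigonometric polynomials, viewed as bounded continuous functions. -/
def trigPoly : Set (BoundedContinuousFunction ℝ ℂ) :=
  {f | ∃ (N : ℕ) (a : Fin N → ℂ) (lam : Fin N → ℝ),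
    ∀ t : ℝ, f t = ∑ j, a j * Complex.exp (Complex.I * lam j * t)}

/-- The almost periodic functions: the sup-norm closure of the trigonometric polynomials. -/
def AP : Set (BoundedContinuousFunction ℝ ℂ) := closure trigPoly

/-- `fourierBohrAt f lam c` says that the Fourier–Bohr coefficient of `f` at `lam` exists
and equals `c`. -/
def fourierBohrAt (f : BoundedContinuousFunction ℝ ℂ) (lam : ℝ) (c : ℂ) : Prop :=
  Filter.Tendsto
    (fun T : ℝ => ((1 / (2 * T) : ℝ) : ℂ) *
      ∫ t in (-T)..T, f t * Complex.exp (-Complex.I * lam * t))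
    Filter.atTop (nhds c)

/-- The Bohr spectrum of `f`. -/
def bohrSpectrum (f : BoundedContinuousFunction ℝ ℂ) : Set ℝ :=
  {lam | ∃ c : ℂ, c ≠ 0 ∧ fourierBohrAt f lam c}

/-- `APin Λ` is the algebra `AP_Λ` of almost periodic functions with Bohr spectrum in `Λ`. -/
def APin (Λ : Set ℝ) : Set (BoundedContinuousFunction ℝ ℂ) :=
  {f | f ∈ AP ∧ bohrSpectrum f ⊆ Λ}

/-- The average of a single exponential converges as `T → ∞`. -/
lemma exp_avg (μ : ℝ) : ∃ c : ℂ, Tendsto (fun T : ℝ =>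
    ((1 / (2 * T) : ℝ) : ℂ) * ∫ t in (-T)..T, Complex.exp (Complex.I * μ * t))
    atTop (𝓝 c) := by
  rcases eq_or_ne μ 0 with h | h
  · refine ⟨1, ?_⟩
    have heq : ∀ᶠ T : ℝ in atTop, (1 : ℂ) = ((1 / (2 * T) : ℝ) : ℂ) *
        (∫ t in (-T)..T, Complex.exp (Complex.I * μ * t)) := by
      filter_upwards [eventually_gt_atTop 0] with T hT
      subst h
      simp only [ofReal_zero, mul_zero, zero_mul, Complex.exp_zero]
      rw [intervalIntegral.integral_const]
      rw [Complex.real_smul]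
      push_cast
      have : (2 * (T:ℂ)) ≠ 0 := by
        simp only [ne_eq, mul_eq_zero]
        push_neg
        exact ⟨two_ne_zero, ofReal_ne_zero.2 hT.ne'⟩
      field_simp
      ring_nf
      rw [mul_inv_cancel₀ (ofReal_ne_zero.2 hT.ne'), one_mul]
    exact tendsto_const_nhds.congr' heq
  · refine ⟨0, ?_⟩
    have hc : Complex.I * μ ≠ 0 := mul_ne_zero Complex.I_ne_zero (ofReal_ne_zero.2 h)
    have hb : Tendsto (fun T : ℝ => (T * |μ|)⁻¹) atTop (𝓝 0) := by
      apply Tendsto.comp tendsto_inv_atTop_zero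
      exact Tendsto.atTop_mul_const (abs_pos.2 h) tendsto_id
    apply squeeze_zero_norm' _ hb
    filter_upwards [eventually_ge_atTop 1] with T hT
    have hT0 : (0:ℝ) < T := lt_of_lt_of_le one_pos hT
    have key : ∫ t in (-T)..T, Complex.exp (Complex.I * μ * t)
        = (Complex.exp ((Complex.I * μ) * ((T:ℝ):ℂ)) -
            Complex.exp ((Complex.I * μ) * (((-T):ℝ):ℂ))) / (Complex.I * μ) := by
      rw [← integral_exp_mul_complex hc]
    rw [key, norm_mul, norm_div]
    have h1 : ∀ s : ℝ, ‖Complex.exp ((Complex.I * μ) * ((s:ℝ):ℂ))‖ = 1 := by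
      intro s
      rw [Complex.norm_exp]
      simp
    have h2 : ‖Complex.exp ((Complex.I * μ) * ((T:ℝ):ℂ)) -
        Complex.exp ((Complex.I * μ) * (((-T):ℝ):ℂ))‖ ≤ 2 := by
      apply (norm_sub_le _ _).trans
      rw [h1, h1]; norm_num
    have h3 : ‖((1 / (2 * T) : ℝ) : ℂ)‖ = 1/(2*T) := by
      rw [Complex.norm_real, Real.norm_eq_abs, abs_of_pos (by positivity)]
    have h4 : ‖Complex.I * (μ:ℂ)‖ = |μ| := by simp
    rw [h3, h4]
    have hμ : (0:ℝ) < |μ| := abs_pos.2 h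
    calc 1 / (2 * T) * (‖_ - _‖ / |μ|)
        ≤ 1 / (2 * T) * (2 / |μ|) := by gcongr
      _ = (T * |μ|)⁻¹ := by field_simp

/-- The Fourier–Bohr averages of a trigonometric polynomial converge. -/
lemma trig_avg (p : BoundedContinuousFunction ℝ ℂ) (hp : p ∈ trigPoly) (lam : ℝ) :
    ∃ c : ℂ, Tendsto (fun T : ℝ => ((1 / (2 * T) : ℝ) : ℂ) *
      ∫ t in (-T)..T, p t * Complex.exp (-Complex.I * lam * t)) atTop (𝓝 c) := by
  obtain ⟨N, a, μ, hμ⟩ := hp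
  choose c hc using fun j : Fin N => exp_avg (μ j - lam)
  refine ⟨∑ j, a j * c j, ?_⟩
  have key : ∀ T : ℝ, ((1 / (2 * T) : ℝ) : ℂ) *
      (∫ t in (-T)..T, p t * Complex.exp (-Complex.I * lam * t))
      = ∑ j, a j * (((1 / (2 * T) : ℝ) : ℂ) *
          ∫ t in (-T)..T, Complex.exp (Complex.I * (μ j - lam) * t)) := by
    intro T
    have hint : ∫ t in (-T)..T, p t * Complex.exp (-Complex.I * lam * t)
        = ∑ j, a j * ∫ t in (-T)..T, Complex.exp (Complex.I * (μ j - lam) * t) := by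
      rw [show (fun t : ℝ => p t * Complex.exp (-Complex.I * lam * t))
          = fun t : ℝ => ∑ j, a j * Complex.exp (Complex.I * (μ j - lam) * t) from ?_]
      · rw [intervalIntegral.integral_finset_sum]
        · simp_rw [intervalIntegral.integral_const_mul]
        · intro j _
          exact (Continuous.intervalIntegrable (by continuity) _ _)
      · funext t
        rw [hμ t, Finset.sum_mul]
        congr 1; funext j
        rw [mul_assoc, ← Complex.exp_add]
        congr 2
        ring
    rw [hint, Finset.mul_sum]
    congr 1; funext j; ring
  simp_rw [key]
  refine tendsto_finset_sum _ fun j _ => tendsto_const_nhds.mul ?_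
  have := hc j
  simp only [Complex.ofReal_sub] at this
  exact this

/-- The averaging operators are uniformly bounded (contractions) for `T > 0`. -/
lemma avg_lipschitz (g h : BoundedContinuousFunction ℝ ℂ) (lam : ℝ) {T : ℝ} (hT : 0 < T) :
    ‖(((1 / (2 * T) : ℝ) : ℂ) * ∫ t in (-T)..T, g t * Complex.exp (-Complex.I * lam * t)) -
      (((1 / (2 * T) : ℝ) : ℂ) * ∫ t in (-T)..T, h t * Complex.exp (-Complex.I * lam * t))‖
      ≤ ‖g - h‖ := by
  have hig : IntervalIntegrable (fun t : ℝ => g t * Complex.exp (-Complex.I * lam * t))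
      volume (-T) T := Continuous.intervalIntegrable (by continuity) _ _
  have hih : IntervalIntegrable (fun t : ℝ => h t * Complex.exp (-Complex.I * lam * t))
      volume (-T) T := Continuous.intervalIntegrable (by continuity) _ _
  rw [← mul_sub, ← intervalIntegral.integral_sub hig hih]
  rw [norm_mul]
  have h3 : ‖((1 / (2 * T) : ℝ) : ℂ)‖ = 1/(2*T) := by
    rw [Complex.norm_real, Real.norm_eq_abs, abs_of_pos (by positivity)]
  rw [h3]
  have hbound : ‖∫ t in (-T)..T, (g t * Complex.exp (-Complex.I * lam * t) -
      h t * Complex.exp (-Complex.I * lam * t))‖ ≤ ‖g - h‖ * |T - (-T)| := by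
    apply intervalIntegral.norm_integral_le_of_norm_le_const
    intro t _
    rw [← sub_mul, norm_mul]
    have he : ‖Complex.exp (-Complex.I * lam * t)‖ = 1 := by
      rw [Complex.norm_exp]
      simp
    rw [he, mul_one]
    have : g t - h t = (g - h) t := by simp
    rw [this]
    exact BoundedContinuousFunction.norm_coe_le_norm (g - h) t
  calc 1 / (2 * T) * ‖_‖ ≤ 1 / (2 * T) * (‖g - h‖ * |T - (-T)|) := by
        apply mul_le_mul_of_nonneg_left hbound (by positivity)
    _ = ‖g - h‖ := by
        rw [sub_neg_eq_add, abs_of_pos (by positivity : (0:ℝ) < T + T),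
          show (1:ℝ)/(2*T) * (‖g - h‖ * (T + T)) = ‖g - h‖ * ((T+T)/(2*T)) by ring,
          show (T+T)/(2*T) = 1 by rw [show T+T=2*T by ring]; exact div_self (by positivity),
          mul_one]

/-- For every almost periodic function `f` and every `λ ∈ ℝ`, the Fourier–Bohr
coefficient of `f` at `λ` exists. -/
theorem fourierBohr_exists (f : BoundedContinuousFunction ℝ ℂ) (hf : f ∈ AP) (lam : ℝ) :
    ∃ c : ℂ, fourierBohrAt f lam c := by
  set F : ℝ → ℂ := fun T => ((1 / (2 * T) : ℝ) : ℂ) *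
    ∫ t in (-T)..T, f t * Complex.exp (-Complex.I * lam * t) with hF
  have hcauchy : CauchySeq F := by
    rw [Metric.cauchySeq_iff]
    intro ε hε
    obtain ⟨p, hp, hdist⟩ := Metric.mem_closure_iff.mp hf (ε/4) (by positivity)
    have hfp : ‖f - p‖ < ε/4 := by rwa [← dist_eq_norm]
    obtain ⟨c, hc⟩ := trig_avg p hp lam
    set Gp : ℝ → ℂ := fun T => ((1 / (2 * T) : ℝ) : ℂ) *
      ∫ t in (-T)..T, p t * Complex.exp (-Complex.I * lam * t)
    have hev : ∀ᶠ T : ℝ in atTop, dist (Gp T) c < ε/4 ∧ (1:ℝ) ≤ T := by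
      filter_upwards [Metric.tendsto_nhds.mp hc (ε/4) (by positivity),
        eventually_ge_atTop 1] with T h1 h2 using ⟨h1, h2⟩
    obtain ⟨M, hM⟩ := eventually_atTop.mp hev
    refine ⟨M, fun m hm n hn => ?_⟩
    obtain ⟨hm1, hm2⟩ := hM m hm
    obtain ⟨hn1, hn2⟩ := hM n hn
    have hfm : dist (F m) (Gp m) ≤ ‖f - p‖ := by
      rw [dist_eq_norm]
      exact avg_lipschitz f p lam (lt_of_lt_of_le one_pos hm2)
    have hfn : dist (F n) (Gp n) ≤ ‖f - p‖ := by
      rw [dist_eq_norm]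
      exact avg_lipschitz f p lam (lt_of_lt_of_le one_pos hn2)
    have h5 : dist (F m) (F n) ≤ dist (F m) c + dist (F n) c :=
      (dist_triangle (F m) c (F n)).trans_eq (by rw [dist_comm c (F n)])
    have h6 : dist (F m) c ≤ dist (F m) (Gp m) + dist (Gp m) c := dist_triangle _ _ _
    have h7 : dist (F n) c ≤ dist (F n) (Gp n) + dist (Gp n) c := dist_triangle _ _ _
    linarith [hfm, hfn, hfp, hm1, hn1, h5, h6, h7]
  obtain ⟨c, hc⟩ := cauchySeq_tendsto_of_complete hcauchy
  exact ⟨c, hc⟩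
end
end

section
/- Let f be an almost periodic function on ℝ. Then the Bohr spectrum of f, i.e. the set of λ ∈ ℝ for which there exists c ≠ 0 with lim_{T→∞} (1/(2T)) ∫_{−T}^{T} f(t)·exp(−i·λ·t) dt = c, is countable. -/
open Complex MeasureTheory Filter Topology

noncomputable section

/-- The averaging functional is bounded by the sup norm. -/
lemma avg_bound (g : BoundedContinuousFunction ℝ ℂ) (lam T : ℝ) (hT : 0 < T) :
    ‖((1 / (2 * T) : ℝ) : ℂ) * ∫ t in (-T)..T, g t * Complex.exp (-Complex.I * lam * t)‖
      ≤ ‖g‖ := by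
  have hb : ∀ x ∈ Set.uIoc (-T) T, ‖g x * Complex.exp (-Complex.I * lam * x)‖ ≤ ‖g‖ := by
    intro x _
    rw [norm_mul]
    have h1 : ‖Complex.exp (-Complex.I * lam * x)‖ = 1 := by
      rw [Complex.norm_exp]; simp
    rw [h1, mul_one]
    exact g.norm_coe_le_norm x
  have hI := intervalIntegral.norm_integral_le_of_norm_le_const hb
  rw [norm_mul]
  have h2 : ‖((1 / (2 * T) : ℝ) : ℂ)‖ = 1 / (2 * T) := by
    rw [Complex.norm_real, Real.norm_eq_abs, abs_of_pos (by positivity)]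
  rw [h2]
  have h3 : |T - (-T)| = 2 * T := by rw [abs_of_pos (by linarith)]; ring
  rw [h3] at hI
  calc 1 / (2 * T) * ‖∫ t in (-T)..T, g t * Complex.exp (-Complex.I * lam * t)‖
      ≤ 1 / (2 * T) * (‖g‖ * (2 * T)) := by
        apply mul_le_mul_of_nonneg_left hI (by positivity)
    _ = ‖g‖ := by field_simp

/-- The average of a nontrivial exponential tends to zero. -/
lemma avg_exp_tendsto (w : ℝ) (hw : w ≠ 0) :
    Tendsto (fun T : ℝ => ((1 / (2 * T) : ℝ) : ℂ) *
      ∫ t in (-T)..T, Complex.exp (Complex.I * w * t)) atTop (nhds 0) := by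
  have hc : (Complex.I * w) ≠ 0 := by
    simp [Complex.ext_iff, hw]
  have hbnd : ∀ᶠ T : ℝ in atTop, ‖((1 / (2 * T) : ℝ) : ℂ) *
      ∫ t in (-T)..T, Complex.exp (Complex.I * w * t)‖ ≤ 1 / (T * |w|) := by
    filter_upwards [eventually_gt_atTop 0] with T hT
    have hint : (∫ t in (-T)..T, Complex.exp (Complex.I * w * t))
        = (Complex.exp (Complex.I * w * T) - Complex.exp (Complex.I * w * (-T))) / (Complex.I * w) := by
      simpa using integral_exp_mul_complex hc (a := -T) (b := T)
    rw [hint, norm_mul]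
    have h2 : ‖((1 / (2 * T) : ℝ) : ℂ)‖ = 1 / (2 * T) := by
      rw [Complex.norm_real, Real.norm_eq_abs, abs_of_pos (by positivity)]
    have h3 : ‖(Complex.exp (Complex.I * w * T) - Complex.exp (Complex.I * w * (-T))) / (Complex.I * w)‖
        ≤ 2 / |w| := by
      rw [norm_div]
      have hn : ‖Complex.I * (w:ℂ)‖ = |w| := by
        rw [norm_mul, Complex.norm_I, one_mul, Complex.norm_real, Real.norm_eq_abs]
      rw [hn]
      apply div_le_div_of_nonneg_right ?_ (abs_nonneg w) |>.trans_eq rfl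
      calc ‖Complex.exp (Complex.I * w * T) - Complex.exp (Complex.I * w * (-T))‖
          ≤ ‖Complex.exp (Complex.I * w * T)‖ + ‖Complex.exp (Complex.I * w * (-T))‖ := norm_sub_le _ _
        _ ≤ 2 := by
            have e1 : ‖Complex.exp (Complex.I * w * T)‖ = 1 := by
              rw [Complex.norm_exp]; simp
            have e2 : ‖Complex.exp (Complex.I * w * (-T))‖ = 1 := by
              rw [Complex.norm_exp]
              simp
            rw [e1, e2]; norm_num
    rw [h2]
    calc 1 / (2 * T) * ‖(Complex.exp (Complex.I * w * T) - Complex.exp (Complex.I * w * (-T))) / (Complex.I * w)‖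
        ≤ 1 / (2 * T) * (2 / |w|) := mul_le_mul_of_nonneg_left h3 (by positivity)
      _ = 1 / (T * |w|) := by field_simp
  have hg : Tendsto (fun T : ℝ => 1 / (T * |w|)) atTop (nhds 0) := by
    have : Tendsto (fun T : ℝ => T * |w|) atTop atTop :=
      Tendsto.atTop_mul_const (abs_pos.mpr hw) tendsto_id
    simpa [one_div, mul_inv, mul_comm, Pi.inv_def] using this.inv_tendsto_atTop
  exact squeeze_zero_norm' hbnd hg

/-- A trigonometric polynomial has vanishing Fourier–Bohr coefficient outside its
frequency set. -/
lemma trig_coeff_zero (P : BoundedContinuousFunction ℝ ℂ) (N : ℕ) (a : Fin N → ℂ)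
    (lam : Fin N → ℝ) (hP : ∀ t : ℝ, P t = ∑ j, a j * Complex.exp (Complex.I * lam j * t))
    (l : ℝ) (hl : ∀ j, lam j ≠ l) : fourierBohrAt P l 0 := by
  have key : ∀ T : ℝ, ((1 / (2 * T) : ℝ) : ℂ) *
      (∫ t in (-T)..T, P t * Complex.exp (-Complex.I * l * t))
      = ∑ j, a j * (((1 / (2 * T) : ℝ) : ℂ) *
          ∫ t in (-T)..T, Complex.exp (Complex.I * (lam j - l) * t)) := by
    intro T
    have hInt : ∀ t : ℝ, P t * Complex.exp (-Complex.I * l * t)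
        = ∑ j, a j * Complex.exp (Complex.I * (lam j - l) * t) := by
      intro t
      rw [hP t, Finset.sum_mul]
      congr 1; ext j
      rw [mul_assoc, ← Complex.exp_add]
      congr 2
      ring
    rw [intervalIntegral.integral_congr (fun t _ => hInt t)]
    rw [intervalIntegral.integral_finset_sum]
    · rw [Finset.mul_sum]
      congr 1; ext j
      rw [intervalIntegral.integral_const_mul]
      ring
    · intro j _
      exact (Continuous.intervalIntegrable (by continuity) _ _)
  unfold fourierBohrAt
  simp_rw [key]
  have : Tendsto (fun T : ℝ => ∑ j, a j * (((1 / (2 * T) : ℝ) : ℂ) *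
      ∫ t in (-T)..T, Complex.exp (Complex.I * (lam j - l) * t))) atTop
      (nhds (∑ j : Fin N, (0 : ℂ))) := by
    apply tendsto_finset_sum
    intro j _
    simpa using (avg_exp_tendsto (lam j - l) (sub_ne_zero.mpr (hl j))).const_mul (a j)
  simpa using this

/-- If `P` has vanishing coefficient at `l`, the coefficient of `f` at `l` is bounded by
`‖f - P‖`. -/
lemma norm_coeff_le (f P : BoundedContinuousFunction ℝ ℂ) (l : ℝ) (c : ℂ)
    (hf : fourierBohrAt f l c) (hP : fourierBohrAt P l 0) : ‖c‖ ≤ ‖f - P‖ := by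
  have hdiff : Tendsto (fun T : ℝ => ((1 / (2 * T) : ℝ) : ℂ) *
      ∫ t in (-T)..T, (f - P) t * Complex.exp (-Complex.I * l * t)) atTop (nhds c) := by
    have h := hf.sub hP
    rw [sub_zero] at h
    apply h.congr'
    filter_upwards [eventually_gt_atTop (0:ℝ)] with T hT
    have hfi : IntervalIntegrable (fun t : ℝ => f t * Complex.exp (-Complex.I * l * t))
        volume (-T) T := (Continuous.intervalIntegrable (by continuity) _ _)
    have hPi : IntervalIntegrable (fun t : ℝ => P t * Complex.exp (-Complex.I * l * t))
        volume (-T) T := (Continuous.intervalIntegrable (by continuity) _ _)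
    rw [← mul_sub, ← intervalIntegral.integral_sub hfi hPi]
    congr 1
    apply intervalIntegral.integral_congr
    intro t _
    simp [sub_mul]
  apply le_of_tendsto hdiff.norm
  filter_upwards [eventually_gt_atTop (0:ℝ)] with T hT
  exact avg_bound (f - P) l T hT

/-- The Bohr spectrum of an almost periodic function is countable. -/
theorem bohrSpectrum_countable (f : BoundedContinuousFunction ℝ ℂ) (hf : f ∈ AP) :
    Set.Countable (bohrSpectrum f) := by
  have hseq : ∀ n : ℕ, ∃ P ∈ trigPoly, dist f P < 1 / (n + 1) := by
    intro n
    exact Metric.mem_closure_iff.mp hf _ (by positivity)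
  choose P hPmem hPd using hseq
  have hPmem' : ∀ n : ℕ, ∃ (N : ℕ) (a : Fin N → ℂ) (lam : Fin N → ℝ),
      ∀ t : ℝ, (P n) t = ∑ j, a j * Complex.exp (Complex.I * lam j * t) := hPmem
  choose N a lam hrep using hPmem'
  have hS : (⋃ n, Set.range (lam n)).Countable :=
    Set.countable_iUnion fun n => (Set.finite_range _).countable
  apply hS.mono
  intro l hl
  by_contra hlS
  obtain ⟨c, hc0, hc⟩ := hl
  have hnotin : ∀ n j, lam n j ≠ l := by
    intro n j h
    exact hlS (Set.mem_iUnion.mpr ⟨n, ⟨j, h⟩⟩)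
  have hb : ∀ n : ℕ, ‖c‖ ≤ 1 / (n + 1) := by
    intro n
    have h0 := trig_coeff_zero (P n) (N n) (a n) (lam n) (hrep n) l (hnotin n)
    have h1 := norm_coeff_le f (P n) l c hc h0
    have h2 : ‖f - P n‖ = dist f (P n) := (dist_eq_norm f (P n)).symm
    rw [h2] at h1
    exact h1.trans (hPd n).le
  have h0 : ‖c‖ ≤ 0 := by
    apply ge_of_tendsto' tendsto_one_div_add_atTop_nhds_zero_nat hb
  exact hc0 (norm_le_zero_iff.mp h0)
end
end

section
/- The Fourier–Bohr series uniquely determines an almost periodic function: if f ∈ AP and f̂(λ) = 0 for every λ ∈ ℝ (i.e., for every λ ∈ ℝ, (1/(2T)) ∫_{−T}^{T} f(t)·exp(−i·λ·t) dt → 0 as T → ∞), then f is identically zero. -/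
open Complex MeasureTheory Filter Topology

noncomputable section

lemma normExpI (x : ℝ) : ‖Complex.exp (Complex.I * x)‖ = 1 := by
  rw [mul_comm]
  simp [Complex.norm_exp_ofReal_mul_I]

lemma normExpI_sub_one_le (θ : ℝ) : ‖Complex.exp (Complex.I * θ) - 1‖ ≤ |θ| := by
  have h1 : ‖Complex.exp (Complex.I * θ) - 1‖ ^ 2 ≤ |θ| ^ 2 := by
    rw [mul_comm, Complex.exp_mul_I]
    have hc := Real.one_sub_sq_div_two_le_cos (x := θ)
    rw [Complex.sq_norm]
    simp only [Complex.normSq_apply, Complex.add_re, Complex.add_im, Complex.sub_re,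
      Complex.sub_im, Complex.mul_re, Complex.mul_im, Complex.I_re, Complex.I_im,
      Complex.one_re, Complex.one_im, Complex.ofReal_cos, Complex.ofReal_sin,
      Complex.cos_ofReal_re, Complex.sin_ofReal_re, Complex.cos_ofReal_im, Complex.sin_ofReal_im]
    have hs := Real.sin_sq_add_cos_sq θ
    rw [_root_.sq_abs]
    nlinarith
  calc ‖Complex.exp (Complex.I * θ) - 1‖
      = Real.sqrt (‖Complex.exp (Complex.I * θ) - 1‖ ^ 2) := (Real.sqrt_sq (norm_nonneg _)).symm
    _ ≤ Real.sqrt (|θ| ^ 2) := Real.sqrt_le_sqrt h1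
    _ = |θ| := Real.sqrt_sq (abs_nonneg _)

lemma syndetic_aux (N : ℕ) (lam : Fin N → ℝ) {η : ℝ} (hη : 0 < η) :
    ∃ L : ℝ, 0 < L ∧ ∀ x : ℝ, ∃ τ : ℝ,
      |τ - x| ≤ L ∧ ∀ j, ‖Complex.exp (Complex.I * lam j * τ) - 1‖ < η := by
  set φ : ℝ → (Fin N → ℂ) := fun t j => Complex.exp (Complex.I * lam j * t) with hφ
  have hφnorm : ∀ t j, ‖φ t j‖ = 1 := by
    intro t j
    have : (Complex.I * lam j * t) = Complex.I * ((lam j * t : ℝ) : ℂ) := by push_cast; ring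
    simp only [hφ, this, normExpI]
  -- compactness of the closure of the range
  have hKsub : closure (Set.range φ) ⊆ Metric.closedBall 0 1 := by
    apply closure_minimal _ Metric.isClosed_closedBall
    rintro - ⟨t, rfl⟩
    rw [Metric.mem_closedBall, dist_zero_right]
    apply pi_norm_le_iff_of_nonneg zero_le_one |>.2
    intro j; rw [hφnorm t j]
  have hK : IsCompact (closure (Set.range φ)) :=
    (isCompact_closedBall (0 : Fin N → ℂ) 1).of_isClosed_subset isClosed_closure hKsub
  -- cover by balls of radius η/2 about points of the range
  have hcover : closure (Set.range φ) ⊆ ⋃ t : ℝ, Metric.ball (φ t) (η / 2) := by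
    intro y hy
    rcases Metric.mem_closure_iff.1 hy (η / 2) (by linarith) with ⟨z, ⟨t, rfl⟩, hz⟩
    exact Set.mem_iUnion.2 ⟨t, by simpa [Metric.mem_ball, dist_comm] using hz⟩
  obtain ⟨s, hs⟩ := hK.elim_finite_subcover (fun t : ℝ => Metric.ball (φ t) (η / 2))
    (fun t => Metric.isOpen_ball) hcover
  refine ⟨1 + ∑ t ∈ s, |t|, by positivity, fun x => ?_⟩
  have hx : φ x ∈ closure (Set.range φ) := subset_closure ⟨x, rfl⟩
  rcases Set.mem_iUnion₂.1 (hs hx) with ⟨t, hts, hxt⟩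
  rw [Metric.mem_ball] at hxt
  refine ⟨x - t, ?_, fun j => ?_⟩
  · have h1 : |x - t - x| = |t| := by rw [show x - t - x = -t by ring, abs_neg]
    rw [h1]
    have : |t| ≤ ∑ u ∈ s, |u| := Finset.single_le_sum (fun u _ => abs_nonneg u) hts
    linarith
  · have key : Complex.exp (Complex.I * lam j * (x - t)) - 1
        = (Complex.exp (Complex.I * lam j * x) - Complex.exp (Complex.I * lam j * t))
          * Complex.exp (-(Complex.I * lam j * t)) := by
      rw [sub_mul, ← Complex.exp_add, ← Complex.exp_add]
      push_cast
      ring_nf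
      rw [Complex.exp_zero]
      ring_nf
    push_cast
    rw [key, norm_mul]
    have h2 : ‖Complex.exp (-(Complex.I * lam j * t))‖ = 1 := by
      have : (-(Complex.I * lam j * t)) = Complex.I * ((-(lam j * t) : ℝ) : ℂ) := by
        push_cast; ring
      rw [this, normExpI]
    rw [h2, mul_one]
    have h3 : dist (φ x j) (φ t j) ≤ dist (φ x) (φ t) := dist_le_pi_dist (φ x) (φ t) j
    have h4 : dist (φ x j) (φ t j)
        = ‖Complex.exp (Complex.I * lam j * x) - Complex.exp (Complex.I * lam j * t)‖ := by
      rw [dist_eq_norm]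
    rw [← h4]
    linarith

lemma normsq_expand (z w : ℂ) :
    ‖z‖ ^ 2 = ‖z - w‖ ^ 2 + 2 * (z * (starRingEnd ℂ) w).re - ‖w‖ ^ 2 := by
  simp only [Complex.sq_norm, Complex.normSq_apply, Complex.sub_re,
    Complex.sub_im, Complex.mul_re, Complex.mul_im, Complex.conj_re, Complex.conj_im]
  ring

lemma meanSq_tendsto_zero (f : BoundedContinuousFunction ℝ ℂ) (hf : f ∈ AP)
    (h : ∀ lam : ℝ, fourierBohrAt f lam 0) :
    Tendsto (fun T : ℝ => (1 / (2 * T)) * ∫ t in (-T)..T, ‖f t‖ ^ 2) atTop (𝓝 0) := by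
  rw [NormedAddCommGroup.tendsto_nhds_zero]
  intro ε hε
  have hr : (0:ℝ) < Real.sqrt (ε / 4) := Real.sqrt_pos.2 (by linarith)
  obtain ⟨p, hp, hdist⟩ := Metric.mem_closure_iff.1 hf _ hr
  have hd2 : dist f p ^ 2 < ε / 4 := by
    have h0 : (0:ℝ) ≤ dist f p := dist_nonneg
    nlinarith [Real.sq_sqrt (show (0:ℝ) ≤ ε / 4 by linarith), hdist]
  obtain ⟨N, a, lam, hpt⟩ := hp
  have hfc : Continuous (f : ℝ → ℂ) := f.continuous
  have hpc : Continuous (p : ℝ → ℂ) := p.continuous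
  have hgc : Continuous (fun t : ℝ => f t * (starRingEnd ℂ) (p t)) :=
    hfc.mul (Complex.continuous_conj.comp hpc)
  -- step 1: the cross term tends to 0
  have hS : Tendsto (fun T : ℝ => ((1 / (2 * T) : ℝ) : ℂ) *
      ∫ t in (-T)..T, f t * (starRingEnd ℂ) (p t)) atTop (𝓝 0) := by
    have hterm : ∀ (j : Fin N) (t : ℝ), f t * ((starRingEnd ℂ) (a j)
        * Complex.exp (-Complex.I * lam j * t))
        = (starRingEnd ℂ) (a j) * (f t * Complex.exp (-Complex.I * lam j * t)) := by
      intro j t; ring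
    have hptc : ∀ t : ℝ, (starRingEnd ℂ) (p t) = ∑ j, (starRingEnd ℂ) (a j)
        * Complex.exp (-Complex.I * lam j * t) := by
      intro t
      rw [hpt t, map_sum]
      refine Finset.sum_congr rfl fun j _ => ?_
      rw [map_mul, ← Complex.exp_conj]
      congr 1
      simp [map_mul, Complex.conj_I, Complex.conj_ofReal]
    have heq : ∀ T : ℝ, ((1 / (2 * T) : ℝ) : ℂ) * ∫ t in (-T)..T, f t * (starRingEnd ℂ) (p t)
        = ∑ j, (starRingEnd ℂ) (a j) * (((1 / (2 * T) : ℝ) : ℂ) *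
            ∫ t in (-T)..T, f t * Complex.exp (-Complex.I * lam j * t)) := by
      intro T
      have h1 : ∀ t ∈ Set.uIcc (-T) T, f t * (starRingEnd ℂ) (p t)
          = ∑ j, (starRingEnd ℂ) (a j) * (f t * Complex.exp (-Complex.I * lam j * t)) := by
        intro t _
        rw [hptc t, Finset.mul_sum]
        exact Finset.sum_congr rfl fun j _ => hterm j t
      rw [intervalIntegral.integral_congr h1, intervalIntegral.integral_finset_sum
        (fun j _ => show IntervalIntegrable (fun t : ℝ => (starRingEnd ℂ) (a j) * (f t * Complex.exp (-Complex.I * lam j * t))) volume (-T) T from (continuous_const.mul (hfc.mul (by fun_prop))).intervalIntegrable _ _),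
        Finset.mul_sum]
      refine Finset.sum_congr rfl fun j _ => ?_
      rw [intervalIntegral.integral_const_mul]
      ring
    have hsum : Tendsto (fun T : ℝ => ∑ j, (starRingEnd ℂ) (a j) *
        (((1 / (2 * T) : ℝ) : ℂ) * ∫ t in (-T)..T, f t
          * Complex.exp (-Complex.I * lam j * t))) atTop (𝓝 0) := by
      have : Tendsto (fun T : ℝ => ∑ j : Fin N, (starRingEnd ℂ) (a j) *
          (((1 / (2 * T) : ℝ) : ℂ) * ∫ t in (-T)..T, f t
            * Complex.exp (-Complex.I * lam j * t))) atTop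
          (𝓝 (∑ j : Fin N, (starRingEnd ℂ) (a j) * 0)) :=
        tendsto_finset_sum _ fun j _ => (h (lam j)).const_mul _
      simpa using this
    exact hsum.congr fun T => (heq T).symm
  -- step 2: main estimate
  filter_upwards [eventually_ge_atTop (1:ℝ),
    (NormedAddCommGroup.tendsto_nhds_zero.1 hS) (ε/8) (by positivity)] with T hT1 hST
  have hT : (0:ℝ) < T := lt_of_lt_of_le one_pos hT1
  have hTT : -T ≤ T := by linarith
  have hi1 : IntervalIntegrable (fun t : ℝ => ‖f t - p t‖ ^ 2) volume (-T) T :=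
    (((hfc.sub hpc).norm.pow 2)).intervalIntegrable _ _
  have hi2 : IntervalIntegrable (fun t : ℝ => 2 * (f t * (starRingEnd ℂ) (p t)).re)
      volume (-T) T := (continuous_const.mul (Complex.continuous_re.comp hgc)).intervalIntegrable _ _
  have hi3 : IntervalIntegrable (fun t : ℝ => ‖p t‖ ^ 2) volume (-T) T :=
    ((hpc.norm.pow 2)).intervalIntegrable _ _
  have hgint : IntervalIntegrable (fun t : ℝ => f t * (starRingEnd ℂ) (p t)) volume (-T) T :=
    hgc.intervalIntegrable _ _
  have hsplit : (∫ t in (-T)..T, ‖f t‖ ^ 2)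
      = (∫ t in (-T)..T, ‖f t - p t‖ ^ 2)
        + (∫ t in (-T)..T, 2 * (f t * (starRingEnd ℂ) (p t)).re)
        - (∫ t in (-T)..T, ‖p t‖ ^ 2) := by
    rw [← intervalIntegral.integral_add hi1 hi2, ← intervalIntegral.integral_sub (hi1.add hi2) hi3]
    exact intervalIntegral.integral_congr fun t _ => normsq_expand (f t) (p t)
  have hre : (∫ t in (-T)..T, 2 * (f t * (starRingEnd ℂ) (p t)).re)
      = 2 * (∫ t in (-T)..T, f t * (starRingEnd ℂ) (p t)).re := by
    rw [intervalIntegral.integral_const_mul]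
    congr 1
    have := Complex.reCLM.intervalIntegral_comp_comm hgint
    simpa only [Complex.reCLM_apply] using this
  -- bounds
  have b1 : (∫ t in (-T)..T, ‖f t - p t‖ ^ 2) ≤ (2 * T) * (dist f p ^ 2) := by
    have hmono : ∀ t ∈ Set.Icc (-T) T, ‖f t - p t‖ ^ 2 ≤ dist f p ^ 2 := by
      intro t _
      have h1 : ‖f t - p t‖ ≤ dist f p := by
        rw [← dist_eq_norm]; exact BoundedContinuousFunction.dist_coe_le_dist t
      exact pow_le_pow_left₀ (norm_nonneg _) h1 2
    calc (∫ t in (-T)..T, ‖f t - p t‖ ^ 2) ≤ ∫ _t in (-T)..T, dist f p ^ 2 :=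
          intervalIntegral.integral_mono_on hTT hi1 intervalIntegrable_const hmono
      _ = (2 * T) * (dist f p ^ 2) := by rw [intervalIntegral.integral_const, smul_eq_mul]; ring
  have b3 : (0:ℝ) ≤ ∫ t in (-T)..T, ‖p t‖ ^ 2 :=
    intervalIntegral.integral_nonneg hTT fun t _ => by positivity
  have bA0 : (0:ℝ) ≤ (1 / (2 * T)) * ∫ t in (-T)..T, ‖f t‖ ^ 2 := by
    have := intervalIntegral.integral_nonneg (μ := volume) hTT (f := fun t : ℝ => ‖f t‖ ^ 2)
      (fun t _ => by positivity)
    positivity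
  have hSre : |(((1 / (2 * T) : ℝ) : ℂ) * ∫ t in (-T)..T, f t * (starRingEnd ℂ) (p t)).re|
      ≤ ‖(((1 / (2 * T) : ℝ) : ℂ) * ∫ t in (-T)..T, f t * (starRingEnd ℂ) (p t))‖ :=
    by exact Complex.abs_re_le_norm _
  have hSre2 : ((1 / (2 * T) : ℝ)) * (∫ t in (-T)..T, f t * (starRingEnd ℂ) (p t)).re
      = (((1 / (2 * T) : ℝ) : ℂ) * ∫ t in (-T)..T, f t * (starRingEnd ℂ) (p t)).re := by
    rw [Complex.re_ofReal_mul]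
  rw [Real.norm_eq_abs, _root_.abs_of_nonneg bA0, hsplit, hre]
  have hinv : (0:ℝ) < 1 / (2 * T) := by positivity
  have key : (1 / (2 * T)) * ((∫ t in (-T)..T, ‖f t - p t‖ ^ 2)
      + 2 * (∫ t in (-T)..T, f t * (starRingEnd ℂ) (p t)).re
      - (∫ t in (-T)..T, ‖p t‖ ^ 2))
      ≤ (1 / (2 * T)) * (∫ t in (-T)..T, ‖f t - p t‖ ^ 2)
        + 2 * ((1 / (2 * T)) * (∫ t in (-T)..T, f t * (starRingEnd ℂ) (p t)).re) := by
    nlinarith [mul_nonneg hinv.le b3]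
  have k1 : (1 / (2 * T)) * (∫ t in (-T)..T, ‖f t - p t‖ ^ 2) ≤ dist f p ^ 2 := by
    have := mul_le_mul_of_nonneg_left b1 hinv.le
    calc (1 / (2 * T)) * (∫ t in (-T)..T, ‖f t - p t‖ ^ 2)
        ≤ (1 / (2 * T)) * ((2 * T) * (dist f p ^ 2)) := this
      _ = dist f p ^ 2 := by field_simp
  have k2 : 2 * ((1 / (2 * T)) * (∫ t in (-T)..T, f t * (starRingEnd ℂ) (p t)).re) ≤ 2 * (ε/8) := by
    have h1 : ((1 / (2 * T)) * (∫ t in (-T)..T, f t * (starRingEnd ℂ) (p t)).re) ≤ ε / 8 := by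
      rw [hSre2]
      calc _ ≤ |(((1 / (2 * T) : ℝ) : ℂ) * ∫ t in (-T)..T, f t * (starRingEnd ℂ) (p t)).re| :=
            le_abs_self _
        _ ≤ _ := hSre
        _ ≤ ε / 8 := hST.le
    linarith
  linarith

/-- The Fourier–Bohr series uniquely determines an almost periodic function: if all
Fourier–Bohr coefficients of `f ∈ AP` vanish, then `f = 0`. -/
theorem fourierBohr_unique (f : BoundedContinuousFunction ℝ ℂ) (hf : f ∈ AP)
    (h : ∀ lam : ℝ, fourierBohrAt f lam 0) :
    f = 0 := by
  by_contra hne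
  have hex : ∃ t₀ : ℝ, f t₀ ≠ 0 := by
    by_contra h0
    push_neg at h0
    exact hne (BoundedContinuousFunction.ext fun t => by simpa using h0 t)
  obtain ⟨t₀, ht₀⟩ := hex
  obtain ⟨c, hc⟩ : ∃ c : ℝ, c = ‖f t₀‖ := ⟨_, rfl⟩
  have hcpos : 0 < c := by rw [hc]; exact norm_pos_iff.2 ht₀
  obtain ⟨p, hp, hdp⟩ := Metric.mem_closure_iff.1 hf (c / 8) (by linarith)
  obtain ⟨N, a, lam, hpt⟩ := hp
  obtain ⟨K₁, hK₁⟩ : ∃ K : ℝ, K = ∑ j, ‖a j‖ := ⟨_, rfl⟩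
  obtain ⟨K₂, hK₂⟩ : ∃ K : ℝ, K = ∑ j, ‖a j‖ * |lam j| := ⟨_, rfl⟩
  have hK₁0 : 0 ≤ K₁ := hK₁ ▸ Finset.sum_nonneg fun j _ => norm_nonneg _
  have hK₂0 : 0 ≤ K₂ := hK₂ ▸ Finset.sum_nonneg fun j _ => mul_nonneg (norm_nonneg _) (abs_nonneg _)
  obtain ⟨η, hηdef⟩ : ∃ x : ℝ, x = (c / 8) / (K₁ + 1) := ⟨_, rfl⟩
  obtain ⟨δ, hδdef⟩ : ∃ x : ℝ, x = (c / 8) / (K₂ + 1) := ⟨_, rfl⟩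
  have hηpos : 0 < η := by rw [hηdef]; apply div_pos (by linarith) (by linarith)
  have hδpos : 0 < δ := by rw [hδdef]; apply div_pos (by linarith) (by linarith)
  have hK₁η : K₁ * η ≤ c / 8 := by
    rw [hηdef, mul_div_assoc', div_le_iff₀ (by linarith)]
    nlinarith
  have hK₂δ : K₂ * δ ≤ c / 8 := by
    rw [hδdef, mul_div_assoc', div_le_iff₀ (by linarith)]
    nlinarith
  obtain ⟨L, hLpos, hsyn⟩ := syndetic_aux N lam hηpos
  have hfc : Continuous (f : ℝ → ℂ) := f.continuous
  -- difference of p at two points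
  have hdiff : ∀ s t : ℝ, p s - p t
      = ∑ j, a j * Complex.exp (Complex.I * lam j * t)
        * (Complex.exp (Complex.I * lam j * ((s - t : ℝ) : ℂ)) - 1) := by
    intro s t
    rw [hpt s, hpt t, ← Finset.sum_sub_distrib]
    refine Finset.sum_congr rfl fun j _ => ?_
    have he : Complex.exp (Complex.I * lam j * (s : ℂ))
        = Complex.exp (Complex.I * lam j * (t : ℂ))
          * Complex.exp (Complex.I * lam j * ((s - t : ℝ) : ℂ)) := by
      rw [← Complex.exp_add]
      congr 1
      push_cast
      ring
    rw [he]
    ring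
  have hshift : ∀ τ : ℝ, (∀ j, ‖Complex.exp (Complex.I * lam j * τ) - 1‖ < η) →
      ∀ t : ℝ, ‖p (t + τ) - p t‖ ≤ K₁ * η := by
    intro τ hτ t
    have h0 : t + τ - t = τ := by ring
    rw [hdiff (t + τ) t, h0]
    have h1 : ∀ j : Fin N, ‖a j * Complex.exp (Complex.I * lam j * t)
        * (Complex.exp (Complex.I * lam j * (τ : ℂ)) - 1)‖ ≤ ‖a j‖ * η := by
      intro j
      rw [norm_mul, norm_mul, show Complex.I * (lam j : ℂ) * (t : ℂ)
        = Complex.I * ((lam j * t : ℝ) : ℂ) from by push_cast; ring, normExpI, mul_one]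
      exact mul_le_mul_of_nonneg_left (hτ j).le (norm_nonneg _)
    calc ‖∑ j, a j * Complex.exp (Complex.I * lam j * t)
          * (Complex.exp (Complex.I * lam j * (τ : ℂ)) - 1)‖
        ≤ ∑ j, ‖a j * Complex.exp (Complex.I * lam j * t)
          * (Complex.exp (Complex.I * lam j * (τ : ℂ)) - 1)‖ := norm_sum_le _ _
      _ ≤ ∑ j, ‖a j‖ * η := Finset.sum_le_sum fun j _ => h1 j
      _ = K₁ * η := by rw [hK₁, ← Finset.sum_mul]
  have hcont : ∀ s t : ℝ, ‖p s - p t‖ ≤ K₂ * |s - t| := by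
    intro s t
    rw [hdiff s t]
    have h1 : ∀ j : Fin N, ‖a j * Complex.exp (Complex.I * lam j * t)
        * (Complex.exp (Complex.I * lam j * ((s - t : ℝ) : ℂ)) - 1)‖
        ≤ ‖a j‖ * |lam j| * |s - t| := by
      intro j
      rw [norm_mul, norm_mul, show Complex.I * (lam j : ℂ) * (t : ℂ)
        = Complex.I * ((lam j * t : ℝ) : ℂ) from by push_cast; ring, normExpI, mul_one]
      have h2 : ‖Complex.exp (Complex.I * lam j * ((s - t : ℝ) : ℂ)) - 1‖
          ≤ |lam j * (s - t)| := by
        have h3 := normExpI_sub_one_le (lam j * (s - t))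
        rw [show Complex.I * ((lam j * (s - t) : ℝ) : ℂ)
          = Complex.I * (lam j : ℂ) * ((s - t : ℝ) : ℂ) from by push_cast; ring] at h3
        exact h3
      calc ‖a j‖ * ‖Complex.exp (Complex.I * lam j * ((s - t : ℝ) : ℂ)) - 1‖
          ≤ ‖a j‖ * |lam j * (s - t)| := mul_le_mul_of_nonneg_left h2 (norm_nonneg _)
        _ = ‖a j‖ * |lam j| * |s - t| := by rw [abs_mul]; ring
    calc ‖∑ j, a j * Complex.exp (Complex.I * lam j * t)
          * (Complex.exp (Complex.I * lam j * ((s - t : ℝ) : ℂ)) - 1)‖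
        ≤ ∑ j, ‖a j * Complex.exp (Complex.I * lam j * t)
          * (Complex.exp (Complex.I * lam j * ((s - t : ℝ) : ℂ)) - 1)‖ := norm_sum_le _ _
      _ ≤ ∑ j, ‖a j‖ * |lam j| * |s - t| := Finset.sum_le_sum fun j _ => h1 j
      _ = K₂ * |s - t| := by rw [hK₂, ← Finset.sum_mul]
  have hfp : ∀ t : ℝ, ‖f t - p t‖ ≤ c / 8 := by
    intro t
    have h1 : ‖f t - p t‖ ≤ dist f p := by
      rw [← dist_eq_norm]; exact BoundedContinuousFunction.dist_coe_le_dist t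
    linarith
  -- windows where |f| is large
  have hlow : ∀ x : ℝ, ∃ u : ℝ, x + δ ≤ u ∧ u ≤ x + 2 * L + δ ∧
      ∀ s : ℝ, |s| ≤ δ → c / 2 ≤ ‖f (u + s)‖ := by
    intro x
    obtain ⟨τ, hτL, hτη⟩ := hsyn (x + L + δ - t₀)
    refine ⟨t₀ + τ, ?_, ?_, ?_⟩
    · have := abs_le.1 hτL; linarith [this.1]
    · have := abs_le.1 hτL; linarith [this.2]
    · intro s hs
      have e1 : ‖p t₀‖ ≥ c - c / 8 := by
        have := hfp t₀
        have h2 : ‖f t₀‖ - ‖p t₀‖ ≤ ‖f t₀ - p t₀‖ := norm_sub_norm_le _ _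
        rw [← hc] at h2
        linarith
      have e2 : ‖p (t₀ + s)‖ ≥ ‖p t₀‖ - K₂ * δ := by
        have h2 := hcont (t₀ + s) t₀
        have h3 : |t₀ + s - t₀| = |s| := by rw [show t₀ + s - t₀ = s by ring]
        rw [h3] at h2
        have h4 : K₂ * |s| ≤ K₂ * δ := mul_le_mul_of_nonneg_left hs hK₂0
        have h5 : ‖p (t₀ + s)‖ - ‖p t₀‖ ≥ -(K₂ * |s|) := by
          have := norm_sub_norm_le (p t₀) (p (t₀ + s))
          rw [norm_sub_rev] at this
          linarith
        linarith
      have e3 : ‖p (t₀ + τ + s)‖ ≥ ‖p (t₀ + s)‖ - K₁ * η := by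
        have h2 := hshift τ hτη (t₀ + s)
        have h3 : t₀ + s + τ = t₀ + τ + s := by ring
        rw [h3] at h2
        have h5 := norm_sub_norm_le (p (t₀ + s)) (p (t₀ + τ + s))
        rw [norm_sub_rev] at h5
        linarith
      have e4 : ‖f (t₀ + τ + s)‖ ≥ ‖p (t₀ + τ + s)‖ - c / 8 := by
        have h2 := hfp (t₀ + τ + s)
        have h5 := norm_sub_norm_le (p (t₀ + τ + s)) (f (t₀ + τ + s))
        rw [norm_sub_rev] at h5
        linarith
      linarith
  obtain ⟨M, hM⟩ : ∃ x : ℝ, x = 2 * L + 2 * δ := ⟨_, rfl⟩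
  have hMpos : 0 < M := by rw [hM]; positivity
  obtain ⟨d, hd⟩ : ∃ x : ℝ, x = 2 * δ * (c / 2) ^ 2 := ⟨_, rfl⟩
  have hdpos : 0 < d := by rw [hd]; positivity
  -- each window of length M contributes at least d
  have hwin : ∀ x : ℝ, d ≤ ∫ t in x..(x + M), ‖f t‖ ^ 2 := by
    intro x
    obtain ⟨u, hu1, hu2, hu3⟩ := hlow x
    have hsub1 : x ≤ u - δ := by linarith
    have hsub2 : u - δ ≤ u + δ := by linarith
    have hsub3 : u + δ ≤ x + M := by rw [hM]; linarith
    have hint : IntervalIntegrable (fun t : ℝ => ‖f t‖ ^ 2) volume x (x + M) :=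
      (hfc.norm.pow 2).intervalIntegrable _ _
    have hconst : d ≤ ∫ t in (u - δ)..(u + δ), ‖f t‖ ^ 2 := by
      have hmono : ∀ t ∈ Set.Icc (u - δ) (u + δ), (c / 2) ^ 2 ≤ ‖f t‖ ^ 2 := by
        intro t ht
        have hs : |t - u| ≤ δ := by
          rw [abs_le]; constructor <;> [linarith [ht.1]; linarith [ht.2]]
        have := hu3 (t - u) hs
        rw [show u + (t - u) = t by ring] at this
        have h0 : (0:ℝ) ≤ c / 2 := by positivity
        exact pow_le_pow_left₀ h0 this 2
      calc d = ((u + δ) - (u - δ)) * (c / 2) ^ 2 := by rw [hd]; ring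
        _ = ∫ _t in (u - δ)..(u + δ), (c / 2) ^ 2 := by
            rw [intervalIntegral.integral_const, smul_eq_mul]
        _ ≤ ∫ t in (u - δ)..(u + δ), ‖f t‖ ^ 2 :=
            intervalIntegral.integral_mono_on hsub2 intervalIntegrable_const
              ((hfc.norm.pow 2).intervalIntegrable _ _) hmono
    have hext : (∫ t in (u - δ)..(u + δ), ‖f t‖ ^ 2) ≤ ∫ t in x..(x + M), ‖f t‖ ^ 2 :=
      intervalIntegral.integral_mono_interval hsub1 hsub2 hsub3
        (Filter.Eventually.of_forall fun t => by positivity) hint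
    linarith
  -- chopping [-nM, nM] into 2n windows
  have hchop : ∀ n : ℕ, 1 ≤ n →
      d / M ≤ (1 / (2 * ((n : ℝ) * M))) * ∫ t in (-((n:ℝ) * M))..((n:ℝ) * M), ‖f t‖ ^ 2 := by
    intro n hn
    obtain ⟨ak, hak⟩ : ∃ g : ℕ → ℝ, g = fun k : ℕ => -((n:ℝ) * M) + (k : ℝ) * M := ⟨_, rfl⟩
    have hadj : ∀ k < 2 * n, IntervalIntegrable (fun t : ℝ => ‖f t‖ ^ 2)
        volume (ak k) (ak (k + 1)) := fun k _ => (hfc.norm.pow 2).intervalIntegrable _ _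
    have hsum := intervalIntegral.sum_integral_adjacent_intervals hadj
    have ha0 : ak 0 = -((n:ℝ) * M) := by simp [hak]
    have ha2n : ak (2 * n) = (n:ℝ) * M := by
      simp only [hak]; push_cast; ring
    rw [ha0, ha2n] at hsum
    have hterm : ∀ k ∈ Finset.range (2 * n), d ≤ ∫ t in (ak k)..(ak (k + 1)), ‖f t‖ ^ 2 := by
      intro k _
      have : ak (k + 1) = ak k + M := by simp only [hak]; push_cast; ring
      rw [this]
      exact hwin (ak k)
    have htot : (2 * n : ℝ) * d ≤ ∫ t in (-((n:ℝ) * M))..((n:ℝ) * M), ‖f t‖ ^ 2 := by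
      rw [← hsum]
      calc (2 * n : ℝ) * d = ∑ _k ∈ Finset.range (2 * n), d := by
            rw [Finset.sum_const, Finset.card_range]; push_cast; ring
        _ ≤ ∑ k ∈ Finset.range (2 * n), ∫ t in (ak k)..(ak (k + 1)), ‖f t‖ ^ 2 :=
            Finset.sum_le_sum hterm
    have hnpos : (0:ℝ) < (n:ℝ) := by exact_mod_cast hn
    have hpos : (0:ℝ) < 2 * ((n:ℝ) * M) := by positivity
    have : (1 / (2 * ((n:ℝ) * M))) * ((2 * n : ℝ) * d)
        ≤ (1 / (2 * ((n:ℝ) * M))) * ∫ t in (-((n:ℝ) * M))..((n:ℝ) * M), ‖f t‖ ^ 2 :=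
      mul_le_mul_of_nonneg_left htot (by positivity)
    calc d / M = (1 / (2 * ((n:ℝ) * M))) * ((2 * n : ℝ) * d) := by field_simp
      _ ≤ _ := this
  -- contradiction with the vanishing mean
  have hA := meanSq_tendsto_zero f hf h
  have hg : Tendsto (fun n : ℕ => (n : ℝ) * M) atTop atTop :=
    tendsto_natCast_atTop_atTop.atTop_mul_const hMpos
  have hseq : Tendsto (fun n : ℕ =>
      (1 / (2 * ((n:ℝ) * M))) * ∫ t in (-((n:ℝ) * M))..((n:ℝ) * M), ‖f t‖ ^ 2) atTop (𝓝 0) :=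
    hA.comp hg
  have hle : d / M ≤ 0 :=
    ge_of_tendsto hseq (Filter.eventually_atTop.2 ⟨1, fun n hn => hchop n hn⟩)
  have : 0 < d / M := div_pos hdpos hMpos
  linarith
end
end

section
/- An element F ∈ AP is invertible in AP (i.e., there exists G ∈ AP with F·G = 1 identically on ℝ) if and only if there exists δ > 0 with |F(t)| ≥ δ for all t ∈ ℝ. -/
open Complex MeasureTheory Filter Topology

noncomputable section

/-- The exponential character `t ↦ exp(i l t)` as a bounded continuous function. -/
def expChar (l : ℝ) : BoundedContinuousFunction ℝ ℂ :=
  BoundedContinuousFunction.ofNormedAddCommGroup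
    (fun t : ℝ => Complex.exp (Complex.I * l * t))
    (Complex.continuous_exp.comp (by fun_prop)) 1
    (fun t => by
      show ‖Complex.exp (Complex.I * l * t)‖ ≤ 1
      simp [Complex.norm_exp])

lemma expChar_apply (l : ℝ) (t : ℝ) : expChar l t = Complex.exp (Complex.I * l * t) := rfl

lemma expChar_mul (a b : ℝ) : expChar a * expChar b = expChar (a + b) := by
  ext t
  rw [BoundedContinuousFunction.mul_apply, expChar_apply, expChar_apply, expChar_apply,
    ← Complex.exp_add]
  congr 1
  push_cast
  ring

lemma expChar_zero : expChar 0 = 1 := by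
  ext t
  rw [expChar_apply]
  simp

lemma expChar_star (l : ℝ) : star (expChar l) = expChar (-l) := by
  ext t
  rw [BoundedContinuousFunction.star_apply, expChar_apply, expChar_apply, Complex.star_def,
    ← Complex.exp_conj, map_mul, map_mul, Complex.conj_I, Complex.conj_ofReal,
    Complex.conj_ofReal]
  congr 1
  push_cast
  ring

/-- The span of the exponential characters. -/
def apSpan : Submodule ℂ (BoundedContinuousFunction ℝ ℂ) :=
  Submodule.span ℂ (Set.range expChar)

lemma trigPoly_eq_span : trigPoly = (apSpan : Set (BoundedContinuousFunction ℝ ℂ)) := by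
  ext f
  constructor
  · rintro ⟨N, a, lam, h⟩
    have hf : f = ∑ j, a j • expChar (lam j) := by
      ext t
      rw [h t, BoundedContinuousFunction.coe_sum, Finset.sum_apply]
      refine Finset.sum_congr rfl fun j _ => ?_
      simp [expChar_apply]
    rw [SetLike.mem_coe, hf]
    exact Submodule.sum_mem _ fun j _ =>
      Submodule.smul_mem _ _ (Submodule.subset_span ⟨lam j, rfl⟩)
  · intro hf
    rw [SetLike.mem_coe, apSpan, Submodule.mem_span_set'] at hf
    obtain ⟨n, c, g, hg⟩ := hf
    choose lam hlam using fun i => (g i).2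
    refine ⟨n, c, lam, fun t => ?_⟩
    rw [← hg, BoundedContinuousFunction.coe_sum, Finset.sum_apply]
    refine Finset.sum_congr rfl fun j _ => ?_
    rw [← hlam j]
    simp [expChar_apply]

/-- The trigonometric polynomials as a star subalgebra. -/
def APalg : StarSubalgebra ℂ (BoundedContinuousFunction ℝ ℂ) where
  carrier := apSpan
  add_mem' := fun h1 h2 => apSpan.add_mem h1 h2
  mul_mem' := by
    intro a b ha hb
    have h2 : a * b ∈ Submodule.span ℂ (Set.range expChar) * Submodule.span ℂ (Set.range expChar) :=
      Submodule.mul_mem_mul ha hb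
    rw [Submodule.span_mul_span] at h2
    refine Submodule.span_le.mpr ?_ h2
    rintro x ⟨u, ⟨l1, rfl⟩, v, ⟨l2, rfl⟩, rfl⟩
    exact Submodule.subset_span ⟨l1 + l2, (expChar_mul l1 l2).symm⟩
  one_mem' := Submodule.subset_span ⟨0, expChar_zero⟩
  algebraMap_mem' := by
    intro c
    show algebraMap ℂ (BoundedContinuousFunction ℝ ℂ) c ∈ apSpan
    rw [Algebra.algebraMap_eq_smul_one]
    exact apSpan.smul_mem c (Submodule.subset_span ⟨0, expChar_zero⟩)
  star_mem' := by
    intro a ha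
    induction ha using Submodule.span_induction with
    | mem x hx =>
      obtain ⟨l, rfl⟩ := hx
      rw [expChar_star]
      exact Submodule.subset_span ⟨-l, rfl⟩
    | zero => simp only [star_zero]; exact apSpan.zero_mem
    | add x y hx hy ihx ihy => rw [star_add]; exact apSpan.add_mem ihx ihy
    | smul c x hx ihx => rw [star_smul]; exact apSpan.smul_mem _ ihx

/-- The closed star subalgebra of almost periodic functions. -/
def APclosed : StarSubalgebra ℂ (BoundedContinuousFunction ℝ ℂ) := APalg.topologicalClosure

lemma AP_eq : AP = (APclosed : Set (BoundedContinuousFunction ℝ ℂ)) := by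
  rw [AP, trigPoly_eq_span]
  rfl

instance : IsClosed (APclosed : Set (BoundedContinuousFunction ℝ ℂ)) :=
  isClosed_closure

/-- An element `F ∈ AP` is invertible in `AP` iff `|F|` is bounded away from zero. -/
theorem invertible_iff_bounded_below (F : BoundedContinuousFunction ℝ ℂ) (hF : F ∈ AP) :
    (∃ G ∈ AP, ∀ t : ℝ, F t * G t = 1) ↔ (∃ δ > 0, ∀ t : ℝ, δ ≤ ‖F t‖) := by
  constructor
  · rintro ⟨G, _, hFG⟩
    have hG0 : G 0 ≠ 0 := by
      intro h
      have := hFG 0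
      rw [h, mul_zero] at this
      exact one_ne_zero (α := ℂ) this.symm
    have hGnorm : 0 < ‖G‖ := lt_of_lt_of_le (norm_pos_iff.mpr hG0) (G.norm_coe_le_norm 0)
    refine ⟨‖G‖⁻¹, inv_pos.mpr hGnorm, fun t => ?_⟩
    have h1 : ‖F t‖ * ‖G t‖ = 1 := by rw [← norm_mul, hFG t, norm_one]
    have h2 : ‖G t‖ ≤ ‖G‖ := G.norm_coe_le_norm t
    rw [inv_le_iff_one_le_mul₀ hGnorm]
    calc (1 : ℝ) = ‖F t‖ * ‖G t‖ := h1.symm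
      _ ≤ ‖F t‖ * ‖G‖ := by gcongr
  · rintro ⟨δ, hδ, hbd⟩
    have hne : ∀ t, F t ≠ 0 := fun t h => by
      have := hbd t
      rw [h, norm_zero] at this
      linarith
    set G0 : BoundedContinuousFunction ℝ ℂ :=
      BoundedContinuousFunction.ofNormedAddCommGroup (fun t => (F t)⁻¹)
        (F.continuous.inv₀ hne) δ⁻¹
        (fun t => by
          rw [norm_inv]
          exact inv_anti₀ hδ (hbd t)) with hG0def
    have hG0app : ∀ t, G0 t = (F t)⁻¹ := fun t => rfl
    have hmul : F * G0 = 1 := by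
      ext t
      rw [BoundedContinuousFunction.mul_apply, hG0app]
      show F t * (F t)⁻¹ = 1
      exact mul_inv_cancel₀ (hne t)
    have hmul' : G0 * F = 1 := by rw [mul_comm]; exact hmul
    have hFmem : F ∈ APclosed := by rw [← SetLike.mem_coe, ← AP_eq]; exact hF
    set x : APclosed := ⟨F, hFmem⟩ with hxdef
    have hUnitA : IsUnit ((x : BoundedContinuousFunction ℝ ℂ)) := ⟨⟨F, G0, hmul, hmul'⟩, rfl⟩
    have hUnit : IsUnit x := APclosed.coe_isUnit.mp hUnitA
    obtain ⟨u, hu⟩ := hUnit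
    set G : BoundedContinuousFunction ℝ ℂ := ((↑(u⁻¹) : APclosed) : BoundedContinuousFunction ℝ ℂ)
      with hGdef
    have hGmem : G ∈ AP := by rw [AP_eq]; exact (↑(u⁻¹) : APclosed).2
    refine ⟨G, hGmem, fun t => ?_⟩
    have h1 : (↑u : APclosed) * (↑(u⁻¹) : APclosed) = 1 := u.mul_inv
    have h2 : F * G = 1 := by
      have h3 : ((↑u : APclosed) : BoundedContinuousFunction ℝ ℂ) * G = 1 := by
        rw [hGdef, ← MulMemClass.coe_mul, h1]
        rfl
      rw [hu] at h3
      exact h3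
    have := congrArg (fun f : BoundedContinuousFunction ℝ ℂ => f t) h2
    simpa using this
end
end

section
/- Let f be a bounded continuous function on the open upper half-plane ℂ⁺ = {z ∈ ℂ : Im z > 0} that lies in the sup-norm closure (in the bounded continuous functions on ℂ⁺) of the set of functions z ↦ Σ_{j=1}^n a_j·exp(i·λ_j·z) with a_j ∈ ℂ and λ_j ≥ 0. Then f extends to a continuous function f̃ on the closed upper half-plane {z : Im z ≥ 0}, the boundary function f* := f̃|ℝ belongs to AP⁺, and sup_{z∈ℂ⁺}|f(z)| = sup_{t∈ℝ}|f*(t)|. -/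
open Complex MeasureTheory Filter Topology

noncomputable section

/-- `AP⁺`: the sup-norm closure of trigonometric polynomials with nonnegative frequencies. -/
def APplus : Set (BoundedContinuousFunction ℝ ℂ) :=
  closure {f | ∃ (N : ℕ) (a : Fin N → ℂ) (lam : Fin N → ℝ), (∀ j, 0 ≤ lam j) ∧
    ∀ t : ℝ, f t = ∑ j, a j * Complex.exp (Complex.I * lam j * t)}

lemma mem_closure_upper (z : ℂ) (hz : 0 ≤ z.im) : z ∈ closure {w : ℂ | 0 < w.im} := by
  have h0 : Tendsto (fun n : ℕ => (1 / (n + 1) : ℝ)) atTop (𝓝 0) :=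
    tendsto_one_div_add_atTop_nhds_zero_nat
  have h1 : Tendsto (fun n : ℕ => z + Complex.I * ((1 / (n + 1) : ℝ) : ℂ)) atTop (𝓝 z) := by
    have : Tendsto (fun n : ℕ => ((1 / (n + 1) : ℝ) : ℂ)) atTop (𝓝 0) := by
      exact_mod_cast ((Complex.continuous_ofReal.tendsto 0).comp h0)
    simpa using tendsto_const_nhds.add (this.const_mul Complex.I)
  refine mem_closure_of_tendsto h1 (Eventually.of_forall fun n => ?_)
  have hpos : (0 : ℝ) < 1 / (n + 1) := by positivity
  simp only [Set.mem_setOf_eq, Complex.add_im, Complex.mul_im, Complex.I_re, Complex.I_im,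
    Complex.ofReal_re, Complex.ofReal_im]
  nlinarith

lemma le_on_closed {u : ℂ → ℝ} (hu : Continuous u) (c : ℝ)
    (h : ∀ z : ℂ, 0 < z.im → u z ≤ c) : ∀ z : ℂ, 0 ≤ z.im → u z ≤ c := by
  intro z hz
  have hsub : closure {w : ℂ | 0 < w.im} ⊆ {w : ℂ | u w ≤ c} :=
    closure_minimal h (isClosed_le hu continuous_const)
  exact hsub (mem_closure_upper z hz)

lemma trig_diff {n : ℕ} (a : Fin n → ℂ) (lam : Fin n → ℝ) :
    Differentiable ℂ (fun z : ℂ => ∑ j, a j * Complex.exp (Complex.I * lam j * z)) := by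
  refine Differentiable.fun_sum fun j _ => ?_
  exact ((differentiable_id.const_mul (Complex.I * lam j)).cexp).const_mul (a j)

lemma trig_abs_bound {n : ℕ} (a : Fin n → ℂ) (lam : Fin n → ℝ) (hlam : ∀ j, 0 ≤ lam j)
    {z : ℂ} (hz : 0 ≤ z.im) :
    ‖∑ j, a j * Complex.exp (Complex.I * lam j * z)‖ ≤ ∑ j, ‖a j‖ := by
  refine (norm_sum_le _ _).trans (Finset.sum_le_sum fun j _ => ?_)
  rw [norm_mul]
  have : ‖Complex.exp (Complex.I * lam j * z)‖ ≤ 1 := by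
    rw [Complex.norm_exp, Real.exp_le_one_iff]
    have : (Complex.I * lam j * z).re = -(lam j * z.im) := by
      simp [Complex.mul_re, Complex.mul_im]
    rw [this]
    have := mul_nonneg (hlam j) hz
    linarith
  calc ‖a j‖ * ‖Complex.exp (Complex.I * lam j * z)‖ ≤ ‖a j‖ * 1 :=
        mul_le_mul_of_nonneg_left this (norm_nonneg _)
    _ = ‖a j‖ := mul_one _

lemma trig_bound {n : ℕ} (a : Fin n → ℂ) (lam : Fin n → ℝ) (hlam : ∀ j, 0 ≤ lam j) {C : ℝ}
    (hC : ∀ t : ℝ, ‖∑ j, a j * Complex.exp (Complex.I * lam j * t)‖ ≤ C)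
    {z : ℂ} (hz : 0 ≤ z.im) :
    ‖∑ j, a j * Complex.exp (Complex.I * lam j * z)‖ ≤ C := by
  set P : ℂ → ℂ := fun w => ∑ j, a j * Complex.exp (Complex.I * lam j * w) with hP
  set A : ℝ := ∑ j, ‖a j‖ with hA
  have hbd : ∀ w : ℂ, 0 ≤ w.im → ‖P w‖ ≤ A := fun w hw => trig_abs_bound a lam hlam hw
  have key : ‖P (Complex.I * (-Complex.I * z))‖ ≤ C := by
    refine PhragmenLindelof.right_half_plane_of_bounded_on_real
      (f := fun w => P (Complex.I * w)) ?_ ?_ ?_ ?_ ?_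
    · exact (((trig_diff a lam).comp (differentiable_id.const_mul Complex.I))).diffContOnCl
    · refine ⟨1, one_lt_two, 0, ?_⟩
      refine Asymptotics.IsBigO.of_bound A ?_
      refine eventually_inf_principal.2 (Eventually.of_forall fun w hw => ?_)
      have him : 0 ≤ (Complex.I * w).im := by
        simp only [Complex.mul_im, Complex.I_re, Complex.I_im]
        simp only [Set.mem_setOf_eq] at hw
        linarith
      have := hbd _ him
      simpa using this.trans (by simp [_root_.abs_of_nonneg (Real.exp_pos _).le])
    · refine ⟨A, ?_⟩
      rw [Filter.eventually_map]
      filter_upwards [eventually_ge_atTop (0 : ℝ)] with x hx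
      refine hbd _ ?_
      simpa using hx
    · intro x
      have : Complex.I * ((x : ℂ) * Complex.I) = ((-x : ℝ) : ℂ) := by
        push_cast
        rw [show Complex.I * ((x : ℂ) * Complex.I) = (Complex.I * Complex.I) * x by ring,
          Complex.I_mul_I]
        ring
      show ‖P (Complex.I * ((x:ℂ) * Complex.I))‖ ≤ C
      rw [this]
      exact hC (-x)
    · simp only [Complex.neg_re, Complex.mul_re, Complex.neg_im, Complex.I_re, Complex.I_im]
      simpa using hz
  have : Complex.I * (-Complex.I * z) = z := by
    rw [show Complex.I * (-Complex.I * z) = -(Complex.I * Complex.I) * z by ring,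
      Complex.I_mul_I]
    ring
  rwa [this] at key

lemma tendsto_c_div_nat (c : ℝ) : Tendsto (fun n : ℕ => c / (n + 1)) atTop (𝓝 0) := by
  have := tendsto_one_div_add_atTop_nhds_zero_nat.const_mul c
  simpa [div_eq_mul_inv] using this

/-- A function in the closure (in the bounded continuous functions on the open upper
half-plane) of the analytic trigonometric polynomials extends continuously to the closed
upper half-plane, its boundary function lies in `AP⁺`, and the sup norms agree. -/
theorem APplus_hol_boundary (f : ℂ → ℂ)
    (hc : ContinuousOn f {z : ℂ | 0 < z.im})
    (hb : ∃ M : ℝ, ∀ z : ℂ, 0 < z.im → ‖f z‖ ≤ M)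
    (happrox : ∀ ε > (0 : ℝ), ∃ (n : ℕ) (a : Fin n → ℂ) (lam : Fin n → ℝ),
      (∀ j, 0 ≤ lam j) ∧
      ∀ z : ℂ, 0 < z.im → ‖f z - ∑ j, a j * Complex.exp (Complex.I * lam j * z)‖ ≤ ε) :
    ∃ g : ℂ → ℂ, ContinuousOn g {z : ℂ | 0 ≤ z.im} ∧
      (∀ z : ℂ, 0 < z.im → g z = f z) ∧
      ∃ F : BoundedContinuousFunction ℝ ℂ,
        (∀ t : ℝ, F t = g t) ∧ F ∈ APplus ∧
        ((⨆ z : {z : ℂ // 0 < z.im}, ‖f z.1‖) = ⨆ t : ℝ, ‖F t‖) := by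
  obtain ⟨M, hM⟩ := hb
  have H : ∀ n : ℕ, ∃ (N : ℕ) (a : Fin N → ℂ) (lam : Fin N → ℝ), (∀ j, 0 ≤ lam j) ∧
      ∀ z : ℂ, 0 < z.im →
        ‖f z - ∑ j, a j * Complex.exp (Complex.I * lam j * z)‖ ≤ 1 / (n + 1) := fun n =>
    happrox (1 / (n + 1)) (by positivity)
  choose N a lam hlam happ using H
  set P : ℕ → ℂ → ℂ := fun n z => ∑ j, a n j * Complex.exp (Complex.I * lam n j * z) with hPdef
  have hPdiff : ∀ n, Differentiable ℂ (P n) := fun n => trig_diff _ _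
  have hCauchy : ∀ n m : ℕ, ∀ z : ℂ, 0 ≤ z.im →
      ‖P n z - P m z‖ ≤ 1 / (n + 1) + 1 / (m + 1) := by
    intro n m
    refine le_on_closed (((hPdiff n).continuous.sub (hPdiff m).continuous).norm) _ ?_
    intro z hz
    calc ‖P n z - P m z‖ = ‖(f z - P m z) - (f z - P n z)‖ := by ring_nf
      _ ≤ ‖f z - P m z‖ + ‖f z - P n z‖ := norm_sub_le _ _
      _ ≤ 1 / (m + 1) + 1 / (n + 1) := add_le_add (happ m z hz) (happ n z hz)
      _ = 1 / (n + 1) + 1 / (m + 1) := by ring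
  have hkey : ∀ z : ℂ, 0 ≤ z.im → CauchySeq (fun n => P n z) := by
    intro z hz
    refine cauchySeq_of_le_tendsto_0 (fun n : ℕ => 2 / (n + 1)) ?_ (tendsto_c_div_nat 2)
    intro n m Nn hn hm
    rw [dist_eq_norm]
    refine (hCauchy n m z hz).trans ?_
    have h1 : (1 : ℝ) / (n + 1) ≤ 1 / (Nn + 1) :=
      one_div_le_one_div_of_le (by positivity) (by exact_mod_cast Nat.succ_le_succ hn)
    have h2 : (1 : ℝ) / (m + 1) ≤ 1 / (Nn + 1) :=
      one_div_le_one_div_of_le (by positivity) (by exact_mod_cast Nat.succ_le_succ hm)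
    have h3 : (2 : ℝ) / ((Nn : ℝ) + 1) = 1 / (Nn + 1) + 1 / (Nn + 1) := by ring
    linarith
  set g : ℂ → ℂ := fun z => limUnder atTop (fun n => P n z) with hgdef
  have hgt : ∀ z : ℂ, 0 ≤ z.im → Tendsto (fun n => P n z) atTop (𝓝 (g z)) :=
    fun z hz => (hkey z hz).tendsto_limUnder
  have hdist : ∀ n : ℕ, ∀ z : ℂ, 0 ≤ z.im → dist (g z) (P n z) ≤ 2 / (n + 1) := by
    intro n z hz
    have h1 : Tendsto (fun m => dist (P m z) (P n z)) atTop (𝓝 (dist (g z) (P n z))) :=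
      (hgt z hz).dist tendsto_const_nhds
    refine le_of_tendsto h1 ?_
    filter_upwards [eventually_ge_atTop n] with m hm
    rw [dist_eq_norm]
    refine (hCauchy m n z hz).trans ?_
    have h2 : (1 : ℝ) / (m + 1) ≤ 1 / (n + 1) :=
      one_div_le_one_div_of_le (by positivity) (by exact_mod_cast Nat.succ_le_succ hm)
    have h3 : (2 : ℝ) / ((n : ℝ) + 1) = 1 / (n + 1) + 1 / (n + 1) := by ring
    linarith
  have htu : TendstoUniformlyOn P g atTop {z : ℂ | 0 ≤ z.im} := by
    rw [Metric.tendstoUniformlyOn_iff]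
    intro ε hε
    filter_upwards [(tendsto_order.1 (tendsto_c_div_nat 2)).2 ε hε] with n hn z hz
    exact lt_of_le_of_lt (hdist n z hz) hn
  have hgcont : ContinuousOn g {z : ℂ | 0 ≤ z.im} :=
    htu.continuousOn (Frequently.of_forall fun n => (hPdiff n).continuous.continuousOn)
  have hfg : ∀ z : ℂ, 0 < z.im → g z = f z := by
    intro z hz
    have h1 : Tendsto (fun n => P n z) atTop (𝓝 (f z)) := by
      rw [tendsto_iff_dist_tendsto_zero]
      refine squeeze_zero (fun n => dist_nonneg) (fun n => ?_)
        tendsto_one_div_add_atTop_nhds_zero_nat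
      rw [dist_comm, dist_eq_norm]
      exact happ n z hz
    exact tendsto_nhds_unique (hgt z hz.le) h1
  have hgM : ∀ z : ℂ, 0 ≤ z.im → ‖g z‖ ≤ M + 3 := by
    intro z hz
    have h0 : ‖P 0 z‖ ≤ M + 1 := by
      refine le_on_closed ((hPdiff 0).continuous.norm) _ ?_ z hz
      intro w hw
      calc ‖P 0 w‖ = ‖f w - (f w - P 0 w)‖ := by ring_nf
        _ ≤ ‖f w‖ + ‖f w - P 0 w‖ := norm_sub_le _ _
        _ ≤ M + 1 := add_le_add (hM w hw) (by simpa using happ 0 w hw)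
    have h1 : ‖g z - P 0 z‖ ≤ 2 := by
      have := hdist 0 z hz
      rw [dist_eq_norm] at this
      simpa using this
    calc ‖g z‖ = ‖P 0 z + (g z - P 0 z)‖ := by ring_nf
      _ ≤ ‖P 0 z‖ + ‖g z - P 0 z‖ := norm_add_le _ _
      _ ≤ (M + 1) + 2 := add_le_add h0 h1
      _ = M + 3 := by ring
  have himS : ∀ t : ℝ, (0 : ℝ) ≤ ((t : ℂ)).im := fun t => by simp
  have hFcont : Continuous fun t : ℝ => g (t : ℂ) := by
    rw [← continuousOn_univ]
    exact hgcont.comp Complex.continuous_ofReal.continuousOn fun t _ => himS t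
  set F : BoundedContinuousFunction ℝ ℂ :=
    BoundedContinuousFunction.ofNormedAddCommGroup (fun t : ℝ => g t) hFcont (M + 3)
      (fun t => hgM t (himS t)) with hFdef
  have hFapp : ∀ t : ℝ, F t = g t := fun t => rfl
  -- F ∈ APplus
  have hQcont : ∀ n, Continuous fun t : ℝ => P n (t : ℂ) :=
    fun n => (hPdiff n).continuous.comp Complex.continuous_ofReal
  set Q : ℕ → BoundedContinuousFunction ℝ ℂ := fun n =>
    BoundedContinuousFunction.ofNormedAddCommGroup (fun t : ℝ => P n t) (hQcont n)
      (∑ j, ‖a n j‖) (fun t => trig_abs_bound (a n) (lam n) (hlam n) (himS t)) with hQdef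
  have hQmem : ∀ n, Q n ∈ {f : BoundedContinuousFunction ℝ ℂ |
      ∃ (N : ℕ) (a : Fin N → ℂ) (lam : Fin N → ℝ), (∀ j, 0 ≤ lam j) ∧
      ∀ t : ℝ, f t = ∑ j, a j * Complex.exp (Complex.I * lam j * t)} :=
    fun n => ⟨N n, a n, lam n, hlam n, fun t => rfl⟩
  have hFQ : Tendsto Q atTop (𝓝 F) := by
    rw [tendsto_iff_dist_tendsto_zero]
    refine squeeze_zero (fun n => dist_nonneg) (fun n => ?_) (tendsto_c_div_nat 2)
    refine (BoundedContinuousFunction.dist_le (by positivity)).2 fun t => ?_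
    rw [dist_comm]
    exact hdist n t (himS t)
  have hFmem : F ∈ APplus := mem_closure_of_tendsto hFQ (Eventually.of_forall hQmem)
  -- sup equality
  haveI : Nonempty {z : ℂ // 0 < z.im} := ⟨⟨Complex.I, by simp⟩⟩
  have hbdd1 : BddAbove (Set.range fun z : {z : ℂ // 0 < z.im} => ‖f z.1‖) := by
    refine ⟨M, ?_⟩; rintro x ⟨z, rfl⟩; exact hM z.1 z.2
  have hbdd2 : BddAbove (Set.range fun t : ℝ => ‖F t‖) :=
    ⟨‖F‖, by rintro x ⟨t, rfl⟩; exact F.norm_coe_le_norm t⟩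
  have hle1 : (⨆ t : ℝ, ‖F t‖) ≤ ⨆ z : {z : ℂ // 0 < z.im}, ‖f z.1‖ := by
    refine ciSup_le fun t => ?_
    have hmemS : ∀ m : ℕ, 0 < ((t : ℂ) + Complex.I * ((1 / (m + 1) : ℝ) : ℂ)).im := by
      intro m
      have : (0 : ℝ) < 1 / (m + 1) := by positivity
      simp only [Complex.add_im, Complex.mul_im, Complex.I_re, Complex.I_im,
        Complex.ofReal_re, Complex.ofReal_im]
      nlinarith [himS t]
    have hw : Tendsto (fun m : ℕ => (t : ℂ) + Complex.I * ((1 / (m + 1) : ℝ) : ℂ))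
        atTop (𝓝 (t : ℂ)) := by
      have h0 : Tendsto (fun m : ℕ => ((1 / (m + 1) : ℝ) : ℂ)) atTop (𝓝 0) := by
        exact_mod_cast (Complex.continuous_ofReal.tendsto 0).comp
          tendsto_one_div_add_atTop_nhds_zero_nat
      simpa using tendsto_const_nhds.add (h0.const_mul Complex.I)
    have hgw : Tendsto (fun m : ℕ => g ((t : ℂ) + Complex.I * ((1 / (m + 1) : ℝ) : ℂ)))
        atTop (𝓝 (g t)) := by
      refine ((hgcont t (himS t)).tendsto).comp ?_
      rw [tendsto_nhdsWithin_iff]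
      exact ⟨hw, Eventually.of_forall fun m => (hmemS m).le⟩
    rw [hFapp t]
    refine le_of_tendsto hgw.norm (Eventually.of_forall fun m => ?_)
    rw [hfg _ (hmemS m)]
    exact le_ciSup hbdd1 ⟨_, hmemS m⟩
  have hle2 : (⨆ z : {z : ℂ // 0 < z.im}, ‖f z.1‖) ≤ ⨆ t : ℝ, ‖F t‖ := by
    refine ciSup_le fun zp => ?_
    obtain ⟨z, hz⟩ := zp
    have key : ∀ n : ℕ, ‖f z‖ ≤ (⨆ t : ℝ, ‖F t‖) + 3 / (n + 1) := by
      intro n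
      have hPz : ‖P n z‖ ≤ (⨆ t : ℝ, ‖F t‖) + 2 / (n + 1) := by
        refine trig_bound (a n) (lam n) (hlam n)
          (C := (⨆ t : ℝ, ‖F t‖) + 2 / (n + 1)) ?_ hz.le
        intro t
        have h1 : ‖F t‖ ≤ ⨆ t : ℝ, ‖F t‖ := le_ciSup hbdd2 t
        have h2 : ‖P n t - g t‖ ≤ 2 / (n + 1) := by
          have := hdist n t (himS t)
          rw [dist_comm, dist_eq_norm] at this
          exact this
        calc ‖P n (t : ℂ)‖ = ‖g (t : ℂ) + (P n t - g t)‖ := by ring_nf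
          _ ≤ ‖g (t : ℂ)‖ + ‖P n t - g t‖ := norm_add_le _ _
          _ ≤ (⨆ t : ℝ, ‖F t‖) + 2 / (n + 1) := add_le_add (by rw [← hFapp t] at *; exact h1) h2
      calc ‖f z‖ = ‖P n z + (f z - P n z)‖ := by ring_nf
        _ ≤ ‖P n z‖ + ‖f z - P n z‖ := norm_add_le _ _
        _ ≤ ((⨆ t : ℝ, ‖F t‖) + 2 / (n + 1)) + 1 / (n + 1) := add_le_add hPz (happ n z hz)
        _ = (⨆ t : ℝ, ‖F t‖) + 3 / (n + 1) := by ring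
    have hlim : Tendsto (fun n : ℕ => (⨆ t : ℝ, ‖F t‖) + 3 / (n + 1)) atTop
        (𝓝 (⨆ t : ℝ, ‖F t‖)) := by
      simpa using tendsto_const_nhds.add (tendsto_c_div_nat 3)
    exact ge_of_tendsto hlim (Eventually.of_forall key)
  exact ⟨g, hgcont, hfg, F, hFapp, hFmem, le_antisymm hle2 hle1⟩
end
end
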